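/- Let C be a compact metric space with at least two points which is rigid for continuous maps. Then C is connected, and no subset of C is homeomorphic to the square [0,1] × [0,1]. -/
import Mathlib


open scoped ENNReal

/-- A compact metric space with at least two points which is rigid for continuous maps is
connected and contains no subset homeomorphic to the square `[0,1] × [0,1]`. -/
theorem statement10 (C : Type*) [MetricSpace C] [CompactSpace C] [Nontrivial C]
    (hrigid : ∀ f : C → C, Continuous f → (∃ c, ∀ x, f x = c) ∨ f = id) :
    ConnectedSpace C ∧
      ∀ S : Set C,
        ¬ Nonempty (↥S ≃ₜ (↥(Set.Icc (0 : ℝ) 1) × ↥(Set.Icc (0 : ℝ) 1))) := by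
  constructor
  · have hpre : PreconnectedSpace C := by
      apply preconnectedSpace_of_forall_constant
      intro f hf x y
      by_contra hxy
      have hxy' : x ≠ y := fun h => hxy (by rw [h])
      set g : C → C := (fun b => if b = f x then y else x) ∘ f with hg
      have hgc : Continuous g := Continuous.comp continuous_of_discreteTopology hf
      have hgx : g x = y := by simp [hg]
      have hgy : g y = x := by
        simp only [hg, Function.comp_apply]
        rw [if_neg (fun h => hxy h.symm)]
      rcases hrigid g hgc with ⟨c, hc⟩ | hid
      · exact hxy' (by rw [← hgy, hc y, ← hc x, hgx])
      · exact hxy' (by simpa [hgx] using (congrFun hid x).symm)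
    exact ⟨inferInstance⟩
  · rintro S ⟨e⟩
    have h0 : (0:ℝ) ∈ Set.Icc (0:ℝ) 1 := by norm_num
    have h1 : (1:ℝ) ∈ Set.Icc (0:ℝ) 1 := by norm_num
    set p : C := ((e.symm (⟨0, h0⟩, ⟨0, h0⟩) : ↥S) : C) with hp
    set q : C := ((e.symm (⟨1, h1⟩, ⟨0, h0⟩) : ↥S) : C) with hq
    have hpq : p ≠ q := by
      intro h
      have := e.symm.injective (Subtype.ext h)
      have := congrArg (fun z => (z.1 : ℝ)) this
      norm_num at this
    have hd : (0:ℝ) < dist p q := dist_pos.mpr hpq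
    set g : C → ↥(Set.Icc (0:ℝ) 1) :=
      fun x => Set.projIcc 0 1 zero_le_one (dist x p / dist p q) with hgdef
    have hgc : Continuous g :=
      continuous_projIcc.comp ((continuous_id.dist continuous_const).div_const _)
    have hgp : g p = ⟨0, h0⟩ := by
      simp [hgdef, Set.projIcc, dist_self]
    have hgq : g q = ⟨1, h1⟩ := by
      have : dist q p / dist p q = 1 := by
        rw [dist_comm q p]; field_simp
      simp [hgdef, this, Set.projIcc]
    set f : C → C := fun x => ((e.symm (g x, ⟨0, h0⟩) : ↥S) : C) with hf
    have hfc : Continuous f :=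
      continuous_subtype_val.comp (e.symm.continuous.comp (hgc.prodMk continuous_const))
    rcases hrigid f hfc with ⟨c, hc⟩ | hid
    · have h1' : f p = f q := by rw [hc, hc]
      have : (e.symm (g p, ⟨0, h0⟩) : ↥S) = e.symm (g q, ⟨0, h0⟩) := Subtype.ext h1'
      have := congrArg (fun z => ((e z).1 : ℝ)) this
      simp [hgp, hgq] at this
    · set x₀ : C := ((e.symm (⟨0, h0⟩, ⟨1, h1⟩) : ↥S) : C) with hx0
      have hfx : f x₀ = x₀ := congrFun hid x₀
      have : (e.symm (g x₀, ⟨0, h0⟩) : ↥S) = e.symm (⟨0, h0⟩, ⟨1, h1⟩) := Subtype.ext hfx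
      have := congrArg (fun z => ((e z).2 : ℝ)) this
      simp at this
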